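/- arXiv:0909.0083 — 3 statements merged into one kernel-verified Lean document; each statement's English description precedes it below -/
import Mathlib

section
/- Suppose an M×N real matrix Φ satisfies the RIP of order K with isometry constant δ, and let Λ ⊂ {1,…,N} with |Λ| < K. Then (1 − δ/(1−δ))‖u‖₂² ≤ ‖A_Λ u‖₂² ≤ (1+δ)‖u‖₂² for all u ∈ ℝ^N such that ‖u‖₀ ≤ K − |Λ| and supp(u) ∩ Λ = ∅. -/
noncomputable section

namespace OMP

open Matrix Finset

/-- The support of a vector, as a `Finset`. -/
def supp {n : ℕ} (x : Fin n → ℝ) : Finset (Fin n) :=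
  Finset.univ.filter fun j => x j ≠ 0

/-- The Euclidean (ℓ²) norm of a vector. -/
def l2 {n : ℕ} (x : Fin n → ℝ) : ℝ := Real.sqrt (∑ j, x j ^ 2)

/-- The ℓ^∞ norm of a vector. -/
def linf {n : ℕ} (x : Fin n → ℝ) : ℝ := ⨆ j, |x j|

/-- The standard inner product of two vectors. -/
def dotp {n : ℕ} (x y : Fin n → ℝ) : ℝ := ∑ j, x j * y j

/-- The restriction of a vector to a set of indices (zero elsewhere). -/
def restr {n : ℕ} (Γ : Finset (Fin n)) (x : Fin n → ℝ) : Fin n → ℝ :=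
  fun j => if j ∈ Γ then x j else 0

/-- The restricted isometry property of order `K` with isometry constant `δ`. -/
def RIP {M N : ℕ} (K : ℕ) (Φ : Matrix (Fin M) (Fin N) ℝ) (δ : ℝ) : Prop :=
  0 < δ ∧ δ < 1 ∧ ∀ x : Fin N → ℝ, (supp x).card ≤ K →
    (1 - δ) * l2 x ^ 2 ≤ l2 (Φ.mulVec x) ^ 2 ∧
      l2 (Φ.mulVec x) ^ 2 ≤ (1 + δ) * l2 x ^ 2

/-- The span of the columns of `Φ` indexed by `Λ`, as a submodule of Euclidean space. -/
def colSpan {M N : ℕ} (Φ : Matrix (Fin M) (Fin N) ℝ) (Λ : Finset (Fin N)) :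
    Submodule ℝ (EuclideanSpace ℝ (Fin M)) :=
  Submodule.span ℝ ((fun j => (WithLp.equiv 2 (Fin M → ℝ)).symm fun i => Φ i j) '' (Λ : Set (Fin N)))

/-- Orthogonal projection `P_Λ` onto the span of the columns of `Φ` indexed by `Λ`. -/
def projCol {M N : ℕ} (Φ : Matrix (Fin M) (Fin N) ℝ) (Λ : Finset (Fin N))
    (v : Fin M → ℝ) : Fin M → ℝ :=
  WithLp.equiv 2 (Fin M → ℝ)
    (Submodule.orthogonalProjection (colSpan Φ Λ) ((WithLp.equiv 2 (Fin M → ℝ)).symm v) : EuclideanSpace ℝ (Fin M))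

/-- The matrix `A_Λ = (I - P_Λ) Φ`: the columns of `Φ` orthogonalized against `colSpan Φ Λ`. -/
def Amat {M N : ℕ} (Φ : Matrix (Fin M) (Fin N) ℝ) (Λ : Finset (Fin N)) :
    Matrix (Fin M) (Fin N) ℝ :=
  Matrix.of fun i j => Φ i j - projCol Φ Λ (fun i' => Φ i' j) i

-- F : linear version of projCol
def Fmap {M N : ℕ} (Φ : Matrix (Fin M) (Fin N) ℝ) (Λ : Finset (Fin N)) :
    (Fin M → ℝ) →ₗ[ℝ] (Fin M → ℝ) :=
  (WithLp.linearEquiv 2 ℝ (Fin M → ℝ)).toLinearMap ∘ₗ (colSpan Φ Λ).subtype ∘ₗ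
    (Submodule.orthogonalProjection (colSpan Φ Λ)).toLinearMap ∘ₗ
    (WithLp.linearEquiv 2 ℝ (Fin M → ℝ)).symm.toLinearMap

lemma projCol_eq {M N : ℕ} (Φ : Matrix (Fin M) (Fin N) ℝ) (Λ : Finset (Fin N)) (v : Fin M → ℝ) :
    projCol Φ Λ v = Fmap Φ Λ v := rfl

lemma Amat_mulVec {M N : ℕ} (Φ : Matrix (Fin M) (Fin N) ℝ) (Λ : Finset (Fin N)) (u : Fin N → ℝ) :
    (Amat Φ Λ).mulVec u = Φ.mulVec u - Fmap Φ Λ (Φ.mulVec u) := by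
  have h : Φ.mulVec u = ∑ j, u j • fun i => Φ i j := by
    funext i
    simp [Matrix.mulVec, dotProduct, mul_comm]
  funext i
  simp only [Amat, Matrix.mulVec, dotProduct, Matrix.of_apply, Pi.sub_apply, sub_mul,
    Finset.sum_sub_distrib]
  congr 1
  simp only [projCol_eq]
  calc ∑ j, Fmap Φ Λ (fun i' => Φ i' j) i * u j
      = ∑ j, (u j • Fmap Φ Λ (fun i' => Φ i' j)) i := by
        simp [mul_comm]
    _ = (∑ j, u j • Fmap Φ Λ (fun i' => Φ i' j)) i := by
        rw [Finset.sum_apply]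
    _ = Fmap Φ Λ (Φ.mulVec u) i := by
        rw [h, map_sum]
        simp

lemma l2_sq {n : ℕ} (x : Fin n → ℝ) : l2 x ^ 2 = ∑ j, x j ^ 2 := by
  rw [l2, Real.sq_sqrt (by positivity)]

lemma l2_sq_norm {M : ℕ} (x : Fin M → ℝ) :
    l2 x ^ 2 = ‖(WithLp.equiv 2 (Fin M → ℝ)).symm x‖ ^ 2 := by
  rw [l2_sq, EuclideanSpace.norm_eq, Real.sq_sqrt (by positivity)]
  simp [sq_abs]

lemma exists_w {M N : ℕ} (Φ : Matrix (Fin M) (Fin N) ℝ) (Λ : Finset (Fin N))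
    (p : EuclideanSpace ℝ (Fin M)) (hp : p ∈ colSpan Φ Λ) :
    ∃ w : Fin N → ℝ, (∀ j, w j ≠ 0 → j ∈ Λ) ∧ Φ.mulVec w = WithLp.equiv 2 (Fin M → ℝ) p := by
  have hrange : ((fun j => (WithLp.equiv 2 (Fin M → ℝ)).symm fun i => Φ i j) '' (Λ : Set (Fin N)))
      = Set.range (fun x : {j // j ∈ Λ} => (WithLp.equiv 2 (Fin M → ℝ)).symm fun i => Φ i x.1) := by
    ext y; simp
  rw [colSpan, hrange, Submodule.mem_span_range_iff_exists_fun] at hp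
  obtain ⟨c, hc⟩ := hp
  refine ⟨fun j => if h : j ∈ Λ then c ⟨j, h⟩ else 0, fun j hj => by by_contra h; simp [h] at hj, ?_⟩
  funext i
  have := congrArg (fun z => WithLp.equiv 2 (Fin M → ℝ) z i) hc
  rw [← this]
  have hmap : WithLp.equiv 2 (Fin M → ℝ)
      (∑ x : {j // j ∈ Λ}, c x • (WithLp.equiv 2 (Fin M → ℝ)).symm fun i => Φ i x.1)
      = ∑ x : {j // j ∈ Λ}, c x • fun i => Φ i x.1 := by
    rw [show (WithLp.equiv 2 (Fin M → ℝ)) = ⇑(WithLp.linearEquiv 2 ℝ (Fin M → ℝ)) from rfl]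
    rw [map_sum]
    rfl
  rw [hmap, Finset.sum_apply]
  rw [show (Finset.univ : Finset {j // j ∈ Λ}) = Λ.attach from rfl]
  rw [Matrix.mulVec, dotProduct]
  rw [← Finset.sum_subset (Finset.subset_univ Λ) (by intro j _ hj; simp [hj])]
  rw [← Finset.sum_attach Λ (fun j => Φ i j * if h : j ∈ Λ then c ⟨j, h⟩ else 0)]
  refine Finset.sum_congr rfl fun x _ => ?_
  simp [x.2, mul_comm]

/-- `A_Λ` satisfies a modified RIP. -/
theorem stmt1 {M N K : ℕ} (Φ : Matrix (Fin M) (Fin N) ℝ) (δ : ℝ) (Λ : Finset (Fin N))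
    (hRIP : RIP K Φ δ) (hΛ : Λ.card < K) :
    ∀ u : Fin N → ℝ, (supp u).card ≤ K - Λ.card → supp u ∩ Λ = ∅ →
      (1 - δ / (1 - δ)) * l2 u ^ 2 ≤ l2 ((Amat Φ Λ).mulVec u) ^ 2 ∧
        l2 ((Amat Φ Λ).mulVec u) ^ 2 ≤ (1 + δ) * l2 u ^ 2 := by
  intro u hcard hdisj
  obtain ⟨hδ0, hδ1, hrip⟩ := hRIP
  have h1δ : (0:ℝ) < 1 - δ := by linarith
  set y : EuclideanSpace ℝ (Fin M) := (WithLp.equiv 2 (Fin M → ℝ)).symm (Φ.mulVec u) with hy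
  set p : EuclideanSpace ℝ (Fin M) := (Submodule.orthogonalProjection (colSpan Φ Λ) y : EuclideanSpace ℝ (Fin M)) with hp
  have hFy : Fmap Φ Λ (Φ.mulVec u) = WithLp.equiv 2 (Fin M → ℝ) p := rfl
  obtain ⟨w, hwsupp, hΦw⟩ := exists_w Φ Λ p (Submodule.orthogonalProjection (colSpan Φ Λ) y).2
  have hA : (Amat Φ Λ).mulVec u = Φ.mulVec (u - w) := by
    rw [Amat_mulVec, Matrix.mulVec_sub, hΦw, hFy]
  -- geometry: squared l2 norm of A u
  have hl2A : l2 ((Amat Φ Λ).mulVec u) ^ 2 = ‖y - p‖ ^ 2 := by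
    rw [Amat_mulVec, l2_sq_norm, hFy]
    congr 1
  -- inner product orthogonality
  have hinner : inner (𝕜 := ℝ) p (y - p) = 0 := by
    have h1 := Submodule.sub_starProjection_mem_orthogonal (K := colSpan Φ Λ) y
    exact h1 p (Submodule.orthogonalProjection (colSpan Φ Λ) y).2
  have hpyth : ‖y‖ ^ 2 = ‖p‖ ^ 2 + ‖y - p‖ ^ 2 := by
    have h2 := norm_add_sq_real p (y - p)
    rw [hinner, add_sub_cancel] at h2
    linarith
  -- disjointness of supports
  have huw : ∀ j, u j * w j = 0 := by
    intro j
    by_cases h : u j = 0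
    · simp [h]
    · have hjs : j ∈ supp u := by simp [supp, h]
      have : j ∉ Λ := fun hjΛ => by
        have : j ∈ supp u ∩ Λ := Finset.mem_inter.2 ⟨hjs, hjΛ⟩
        simp [hdisj] at this
      have : w j = 0 := by by_contra h'; exact this (hwsupp j h')
      simp [this]
  have hl2ge : l2 u ^ 2 ≤ l2 (u - w) ^ 2 := by
    rw [l2_sq, l2_sq]
    refine Finset.sum_le_sum fun j _ => ?_
    have := huw j
    simp only [Pi.sub_apply]
    nlinarith [sq_nonneg (w j)]
  -- cardinality bound
  have hcard2 : (supp (u - w)).card ≤ K := by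
    have hsub : supp (u - w) ⊆ supp u ∪ Λ := by
      intro j hj
      simp only [supp, Finset.mem_filter, Finset.mem_univ, true_and, Pi.sub_apply] at hj
      by_cases h : u j = 0
      · refine Finset.mem_union_right _ (hwsupp j fun h' => hj ?_)
        rw [h, h', sub_zero]
      · exact Finset.mem_union_left _ (by simp [supp, h])
    calc (supp (u - w)).card ≤ (supp u ∪ Λ).card := Finset.card_le_card hsub
      _ ≤ (supp u).card + Λ.card := Finset.card_union_le _ _
      _ ≤ (K - Λ.card) + Λ.card := by omega
      _ = K := by omega
  have hrip2 := hrip (u - w) hcard2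
  have hrip1 := hrip u (le_trans hcard (Nat.sub_le _ _))
  constructor
  · -- lower bound
    have hstep : (1 - δ / (1 - δ)) * l2 u ^ 2 ≤ (1 - δ) * l2 u ^ 2 := by
      have hnn : (0:ℝ) ≤ l2 u ^ 2 := sq_nonneg _
      have : δ ≤ δ / (1 - δ) := by
        rw [le_div_iff₀ h1δ]; nlinarith
      nlinarith
    calc (1 - δ / (1 - δ)) * l2 u ^ 2 ≤ (1 - δ) * l2 u ^ 2 := hstep
      _ ≤ (1 - δ) * l2 (u - w) ^ 2 := by nlinarith
      _ ≤ l2 (Φ.mulVec (u - w)) ^ 2 := hrip2.1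
      _ = l2 ((Amat Φ Λ).mulVec u) ^ 2 := by rw [hA]
  · -- upper bound
    have hyn : ‖y‖ ^ 2 = l2 (Φ.mulVec u) ^ 2 := (l2_sq_norm _).symm
    calc l2 ((Amat Φ Λ).mulVec u) ^ 2 = ‖y - p‖ ^ 2 := hl2A
      _ ≤ ‖y‖ ^ 2 := by linarith [hpyth, sq_nonneg ‖p‖]
      _ = l2 (Φ.mulVec u) ^ 2 := hyn
      _ ≤ (1 + δ) * l2 u ^ 2 := hrip1.2

end OMP
end
end

section
/- Suppose an M×N real matrix Φ satisfies the RIP of order K+1 with isometry constant δ < 1/3. Let x ∈ ℝ^N with ‖x‖₀ ≤ K, let x'(1), x'(2), …, x'(K) denote the entries of x ordered so that |x'(1)| ≥ |x'(2)| ≥ ⋯ ≥ |x'(K)| ≥ 0, and suppose |x'(j)|/|x'(j+1)| ≥ α for all j ∈ {1,…,K−1}, where α > (1 + 2(δ/(1−δ))√(K−1)) / (1 − 2δ/(1−δ)). Then for any run of Orthogonal Matching Pursuit applied to y = Φx (Λ⁰ = ∅; at each iteration x^ℓ minimizes ‖y − Φz‖₂ over z supported on Λ^ℓ, h^ℓ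 = Φᵀ(y − Φx^ℓ), and Λ^{ℓ+1} = Λ^ℓ ∪ {j_ℓ} with j_ℓ maximizing |h^ℓ(j)|), OMP recovers x exactly from y in K iterations: supp(x) ⊆ Λ^K and the least-squares estimate on Λ^K equals x. -/
noncomputable section

namespace OMP

open Matrix Finset

lemma mem_supp {n : ℕ} {x : Fin n → ℝ} {j : Fin n} : j ∈ supp x ↔ x j ≠ 0 := by simp [supp]

lemma not_mem_supp {n : ℕ} {x : Fin n → ℝ} {j : Fin n} : j ∉ supp x ↔ x j = 0 := by simp [supp]

lemma sumsq_nonneg {n : ℕ} (x : Fin n → ℝ) : 0 ≤ ∑ j, x j ^ 2 :=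
  Finset.sum_nonneg fun _ _ => sq_nonneg _

lemma l2_nonneg {n : ℕ} (x : Fin n → ℝ) : 0 ≤ l2 x := Real.sqrt_nonneg _

lemma eq_zero_of_l2 {n : ℕ} {x : Fin n → ℝ} (h : l2 x = 0) : x = 0 := by
  have h0 : ∑ j, x j ^ 2 = 0 := by rw [← l2_sq, h]; ring
  funext j
  have := (Finset.sum_eq_zero_iff_of_nonneg (fun j _ => sq_nonneg (x j))).1 h0 j (Finset.mem_univ j)
  simpa [pow_eq_zero_iff] using this

lemma dotp_self {n : ℕ} (x : Fin n → ℝ) : dotp x x = ∑ j, x j ^ 2 := by simp [dotp, sq]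

lemma sumsq_le_sumsq {n : ℕ} {x y : Fin n → ℝ} (h : l2 x ≤ l2 y) :
    ∑ j, x j ^ 2 ≤ ∑ j, y j ^ 2 := by
  have := pow_le_pow_left₀ (l2_nonneg x) h 2
  rwa [l2_sq, l2_sq] at this

lemma polar {m : ℕ} (a b : ℝ) (p q : Fin m → ℝ) :
    (∑ x, (a * p x + b * q x) * (a * p x + b * q x))
      - ∑ x, (a * p x - b * q x) * (a * p x - b * q x)
      = 4 * a * b * ∑ x, p x * q x := by
  rw [← Finset.sum_sub_distrib, Finset.mul_sum]
  exact Finset.sum_congr rfl (by intros; ring)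

lemma Qbound {M N K : ℕ} {Φ : Matrix (Fin M) (Fin N) ℝ} {δ : ℝ}
    (hR : RIP K Φ δ) {w : Fin N → ℝ} (hw : (supp w).card ≤ K) :
    |dotp (Φ.mulVec w) (Φ.mulVec w) - dotp w w| ≤ δ * ∑ j, w j ^ 2 := by
  obtain ⟨h1, h2⟩ := hR.2.2 w hw
  rw [dotp_self, dotp_self, ← l2_sq w, ← l2_sq (Φ.mulVec w)]
  have := sq_nonneg (l2 w)
  rw [abs_le]; constructor <;> nlinarith

lemma bilin {M N K : ℕ} {Φ : Matrix (Fin M) (Fin N) ℝ} {δ : ℝ}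
    (hR : RIP K Φ δ) {u v : Fin N → ℝ} (h : (supp u ∪ supp v).card ≤ K) :
    |dotp (Φ.mulVec u) (Φ.mulVec v) - dotp u v| ≤ δ * l2 u * l2 v := by
  set a := l2 v with ha
  set b := l2 u with hb
  have ha0 : 0 ≤ a := l2_nonneg v
  have hb0 : 0 ≤ b := l2_nonneg u
  rcases eq_or_lt_of_le hb0 with hbz | hbp
  · have : u = 0 := eq_zero_of_l2 hbz.symm
    subst this
    simp only [dotp, Matrix.mulVec_zero, Pi.zero_apply, zero_mul, Finset.sum_const_zero,
      sub_zero, abs_zero]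
    exact mul_nonneg (mul_nonneg hR.1.le hb0) ha0
  rcases eq_or_lt_of_le ha0 with haz | hap
  · have : v = 0 := eq_zero_of_l2 haz.symm
    subst this
    simp only [dotp, Matrix.mulVec_zero, Pi.zero_apply, mul_zero, Finset.sum_const_zero,
      sub_zero, abs_zero]
    exact mul_nonneg (mul_nonneg hR.1.le hb0) ha0
  set w1 : Fin N → ℝ := a • u + b • v with hw1
  set w2 : Fin N → ℝ := a • u - b • v with hw2
  have hsupp1 : supp w1 ⊆ supp u ∪ supp v := by
    intro j hj
    rw [mem_supp] at hj
    rw [Finset.mem_union, mem_supp, mem_supp]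
    by_contra hc; push_neg at hc
    apply hj; simp [hw1, hc.1, hc.2]
  have hsupp2 : supp w2 ⊆ supp u ∪ supp v := by
    intro j hj
    rw [mem_supp] at hj
    rw [Finset.mem_union, mem_supp, mem_supp]
    by_contra hc; push_neg at hc
    apply hj; simp [hw2, hc.1, hc.2]
  have hQ1 := Qbound hR (le_trans (Finset.card_le_card hsupp1) h)
  have hQ2 := Qbound hR (le_trans (Finset.card_le_card hsupp2) h)
  have hm1 : Φ.mulVec w1 = a • Φ.mulVec u + b • Φ.mulVec v := by
    rw [hw1, Matrix.mulVec_add, Matrix.mulVec_smul, Matrix.mulVec_smul]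
  have hm2 : Φ.mulVec w2 = a • Φ.mulVec u - b • Φ.mulVec v := by
    rw [hw2, Matrix.mulVec_sub, Matrix.mulVec_smul, Matrix.mulVec_smul]
  have hid : (dotp (Φ.mulVec w1) (Φ.mulVec w1) - dotp w1 w1)
      - (dotp (Φ.mulVec w2) (Φ.mulVec w2) - dotp w2 w2)
      = 4 * a * b * (dotp (Φ.mulVec u) (Φ.mulVec v) - dotp u v) := by
    rw [hm1, hm2, hw1, hw2]
    simp only [dotp, Pi.add_apply, Pi.sub_apply, Pi.smul_apply, smul_eq_mul]
    linear_combination polar a b (Φ.mulVec u) (Φ.mulVec v) - polar a b u v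
  have hs1 : ∑ j, w1 j ^ 2 + ∑ j, w2 j ^ 2
      = 2 * a ^ 2 * (∑ j, u j ^ 2) + 2 * b ^ 2 * (∑ j, v j ^ 2) := by
    rw [hw1, hw2, Finset.mul_sum, Finset.mul_sum, ← Finset.sum_add_distrib,
      ← Finset.sum_add_distrib]
    exact Finset.sum_congr rfl (by
      intros
      simp only [Pi.add_apply, Pi.sub_apply, Pi.smul_apply, smul_eq_mul]; ring)
  have hu2 : ∑ j, u j ^ 2 = b ^ 2 := (l2_sq u).symm
  have hv2 : ∑ j, v j ^ 2 = a ^ 2 := (l2_sq v).symm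
  rw [hu2, hv2] at hs1
  have h4 : (0:ℝ) < 4 * a * b := by positivity
  have habs : 4 * a * b * |dotp (Φ.mulVec u) (Φ.mulVec v) - dotp u v| ≤ δ * (4 * a ^ 2 * b ^ 2) := by
    have h5 : |(dotp (Φ.mulVec w1) (Φ.mulVec w1) - dotp w1 w1)
        - (dotp (Φ.mulVec w2) (Φ.mulVec w2) - dotp w2 w2)| ≤ δ * (4 * a ^ 2 * b ^ 2) := by
      calc _ ≤ |dotp (Φ.mulVec w1) (Φ.mulVec w1) - dotp w1 w1|
          + |dotp (Φ.mulVec w2) (Φ.mulVec w2) - dotp w2 w2| := abs_sub _ _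
      _ ≤ δ * ∑ j, w1 j ^ 2 + δ * ∑ j, w2 j ^ 2 := add_le_add hQ1 hQ2
      _ = δ * (4 * a ^ 2 * b ^ 2) := by rw [← mul_add, hs1]; ring
    rw [hid, abs_mul, abs_of_pos h4] at h5
    exact h5
  nlinarith [abs_nonneg (dotp (Φ.mulVec u) (Φ.mulVec v) - dotp u v), habs, h4,
    mul_pos hbp hap]

lemma ortho {n : ℕ} (r w : Fin n → ℝ)
    (H : ∀ t : ℝ, ∑ j, r j ^ 2 ≤ ∑ j, (r j - t * w j) ^ 2) : dotp w r = 0 := by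
  set c := dotp w r with hc
  set d := ∑ j, w j ^ 2 with hdd
  have hd : 0 ≤ d := sumsq_nonneg w
  have key : ∀ t : ℝ, ∑ j, (r j - t * w j) ^ 2 = ∑ j, r j ^ 2 - 2 * t * c + t ^ 2 * d := by
    intro t
    have : ∀ j ∈ Finset.univ, (r j - t * w j) ^ 2
        = r j ^ 2 - 2 * t * (w j * r j) + t ^ 2 * w j ^ 2 := by intros; ring
    rw [Finset.sum_congr rfl this, Finset.sum_add_distrib, Finset.sum_sub_distrib,
      ← Finset.mul_sum, ← Finset.mul_sum, hc, hdd, dotp]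
  have h1 := H (c / (d + 1))
  rw [key] at h1
  have hd1 : (0:ℝ) < d + 1 := by linarith
  have h2 : 0 ≤ -2 * (c / (d + 1)) * c + (c / (d + 1)) ^ 2 * d := by linarith
  have hc2 : c ^ 2 ≤ 0 := by
    have h3 := mul_le_mul_of_nonneg_right h2 (sq_nonneg (d + 1))
    have h4 : (-2 * (c / (d + 1)) * c + (c / (d + 1)) ^ 2 * d) * (d + 1) ^ 2
        = -2 * c ^ 2 * (d + 1) + c ^ 2 * d := by
      field_simp
    rw [h4] at h3
    nlinarith [sq_nonneg c, hd]
  have hc0 : c ^ 2 = 0 := le_antisymm hc2 (sq_nonneg c)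
  exact pow_eq_zero_iff two_ne_zero |>.1 hc0

/-- single vector facts -/
lemma l2_single {n : ℕ} (j : Fin n) : l2 (Pi.single j (1:ℝ) : Fin n → ℝ) = 1 := by
  have h : ∑ k, (Pi.single j (1:ℝ) : Fin n → ℝ) k ^ 2 = 1 := by
    rw [Finset.sum_eq_single j]
    · simp
    · intro k _ hk; rw [Pi.single_apply, if_neg hk]; ring
    · intro hk; exact absurd (Finset.mem_univ j) hk
  unfold l2
  rw [h, Real.sqrt_one]

lemma dotp_single {n : ℕ} (j : Fin n) (u : Fin n → ℝ) :
    dotp (Pi.single j (1:ℝ) : Fin n → ℝ) u = u j := by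
  unfold dotp
  rw [Finset.sum_eq_single j]
  · simp
  · intro k _ hk; rw [Pi.single_apply, if_neg hk]; ring
  · intro hk; exact absurd (Finset.mem_univ j) hk

lemma supp_add_subset {n : ℕ} (x y : Fin n → ℝ) : supp (x + y) ⊆ supp x ∪ supp y := by
  intro j hj
  rw [mem_supp] at hj
  rw [Finset.mem_union, mem_supp, mem_supp]
  by_contra hc; push_neg at hc
  apply hj; simp [hc.1, hc.2]

lemma supp_smul_single {n : ℕ} (j : Fin n) (t : ℝ) :
    supp (t • (Pi.single j 1 : Fin n → ℝ)) ⊆ {j} := by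
  intro k hk
  rw [mem_supp] at hk
  rw [Finset.mem_singleton]
  by_contra hne
  simp [Pi.single_apply, hne] at hk

lemma le_of_sq {p q : ℝ} (hp : 0 ≤ p) (hq : 0 ≤ q) (h : p ^ 2 ≤ q ^ 2) : p ≤ q := by
  nlinarith

lemma supp_single {n : ℕ} (j : Fin n) : supp (Pi.single j (1:ℝ) : Fin n → ℝ) ⊆ {j} := by
  intro k hk
  rw [mem_supp] at hk
  rw [Finset.mem_singleton]
  by_contra hne
  rw [Pi.single_apply, if_neg hne] at hk
  exact hk rfl

set_option maxHeartbeats 1000000 in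
lemma key_step {M N K : ℕ} (Φ : Matrix (Fin M) (Fin N) ℝ) (δ α : ℝ) (x : Fin N → ℝ)
    (hRIP : RIP (K + 1) Φ δ) (hδ : δ < 1 / 3)
    (hsp : (supp x).card ≤ K)
    (ord : Fin K → Fin N) (hinj : Function.Injective ord)
    (hcover : ∀ j : Fin N, x j ≠ 0 → ∃ i, ord i = j)
    (hmono : ∀ i i' : Fin K, i ≤ i' → |x (ord i')| ≤ |x (ord i)|)
    (hratio : ∀ (i : Fin K) (hi : (i : ℕ) + 1 < K), |x (ord i)| ≥ α * |x (ord ⟨i + 1, hi⟩)|)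
    (hα : α > (1 + 2 * (δ / (1 - δ)) * Real.sqrt ((K : ℝ) - 1)) / (1 - 2 * δ / (1 - δ)))
    (xsl : Fin N → ℝ) (jl : Fin N) (Λl : Finset (Fin N))
    (ℓ : ℕ) (hℓK : ℓ < K)
    (hΛS : Λl = (Finset.univ.filter fun i : Fin K => (i:ℕ) < ℓ).image ord)
    (hx0 : x (ord ⟨ℓ, hℓK⟩) ≠ 0)
    (hsupp_xs : supp xsl ⊆ Λl)
    (hmin : ∀ z : Fin N → ℝ, supp z ⊆ Λl →
      l2 (Φ.mulVec x - Φ.mulVec xsl) ≤ l2 (Φ.mulVec x - Φ.mulVec z))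
    (hselmax : ∀ j : Fin N, |(Φᵀ.mulVec (Φ.mulVec x - Φ.mulVec xsl)) j|
      ≤ |(Φᵀ.mulVec (Φ.mulVec x - Φ.mulVec xsl)) jl|) :
    jl = ord ⟨ℓ, hℓK⟩ := by
  set iℓ : Fin K := ⟨ℓ, hℓK⟩ with hiℓdef
  have hδ0 : 0 < δ := hRIP.1
  have h1δ : 0 < 1 - δ := by linarith [hRIP.2.1]
  set δ' : ℝ := δ / (1 - δ) with hδ'def
  have hδ'pos : 0 < δ' := div_pos hδ0 h1δ
  have hδ'half : δ' < 1 / 2 := by rw [hδ'def, div_lt_iff₀ h1δ]; linarith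
  have h12 : 0 < 1 - 2 * δ' := by linarith
  set c : ℝ := Real.sqrt ((K : ℝ) - 1) with hcdef
  have hc0 : 0 ≤ c := Real.sqrt_nonneg _
  have hK1 : 1 ≤ K := by omega
  have hK1R : (1:ℝ) ≤ (K:ℝ) := by exact_mod_cast hK1
  have hcc : c * c = (K : ℝ) - 1 := Real.mul_self_sqrt (by linarith)
  have hαgt : 1 + 2 * δ' * c < α * (1 - 2 * δ') := by
    have hden : 1 - 2 * δ / (1 - δ) = 1 - 2 * δ' := by rw [hδ'def]; ring
    rw [hden] at hα
    rw [gt_iff_lt, div_lt_iff₀ h12] at hα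
    linarith
  have hα0 : 0 < α := by nlinarith
  set a : ℝ := |x (ord iℓ)| with hadef
  have ha : 0 < a := abs_pos.2 hx0
  obtain ⟨b, hb0, hab, hbbound⟩ : ∃ b : ℝ, 0 ≤ b ∧ α * b ≤ a ∧
      ∀ i : Fin K, ℓ < (i : ℕ) → |x (ord i)| ≤ b := by
    by_cases hlt : ℓ + 1 < K
    · refine ⟨|x (ord ⟨ℓ + 1, hlt⟩)|, abs_nonneg _, ?_, ?_⟩
      · exact hratio iℓ hlt
      · intro i hi
        exact hmono ⟨ℓ + 1, hlt⟩ i (by rw [Fin.le_def, Fin.val_mk]; omega)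
    · refine ⟨0, le_rfl, by linarith [mul_zero α], ?_⟩
      intro i hi
      exfalso
      have := i.isLt
      omega
  -- basic Λ facts
  have hΛsupp : Λl ⊆ supp x := by
    intro j hj
    rw [hΛS, Finset.mem_image] at hj
    obtain ⟨i, hi, rfl⟩ := hj
    rw [Finset.mem_filter] at hi
    rw [mem_supp]
    intro h0
    have hmle := hmono i iℓ (by rw [Fin.le_def]; exact le_of_lt hi.2)
    rw [h0, abs_zero] at hmle
    rw [hadef] at ha
    linarith
  have hordnot : ord iℓ ∉ Λl := by
    rw [hΛS, Finset.mem_image]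
    rintro ⟨i, hi, hEq⟩
    rw [Finset.mem_filter] at hi
    have h2 := hinj hEq
    have : (i : ℕ) = ℓ := by rw [h2]
    omega
  set u : Fin N → ℝ := x - xsl with hu
  have hxsl_zero : ∀ j, j ∉ Λl → xsl j = 0 := by
    intro j hj
    by_contra hne
    exact hj (hsupp_xs (mem_supp.2 hne))
  have hsuppu : supp u ⊆ supp x := by
    intro j hj
    rw [mem_supp] at hj
    by_contra hns
    have hx0j : x j = 0 := not_mem_supp.1 hns
    have hxsj : xsl j = 0 := by
      apply hxsl_zero
      intro hm
      exact hns (hΛsupp hm)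
    apply hj
    simp [hu, hx0j, hxsj]
  have hcardu : (supp u).card ≤ K := le_trans (Finset.card_le_card hsuppu) hsp
  have hr : Φ.mulVec u = Φ.mulVec x - Φ.mulVec xsl := by
    rw [hu, Matrix.mulVec_sub]
  have hvec_eq : ∀ j, (Φᵀ.mulVec (Φ.mulVec x - Φ.mulVec xsl)) j
      = dotp (Φ.mulVec (Pi.single j (1:ℝ) : Fin N → ℝ)) (Φ.mulVec u) := by
    intro j
    rw [← hr, Matrix.mulVec_single]
    unfold dotp
    simp only [Matrix.mulVec, dotProduct, Matrix.transpose_apply, mul_one, MulOpposite.op_one, one_smul, Matrix.col_apply]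
  have hcardj : ∀ j : Fin N,
      (supp (Pi.single j (1:ℝ) : Fin N → ℝ) ∪ supp u).card ≤ K + 1 := by
    intro j
    have hsub : supp (Pi.single j (1:ℝ) : Fin N → ℝ) ∪ supp u ⊆ insert j (supp x) := by
      intro k hk
      rcases Finset.mem_union.1 hk with hk | hk
      · exact Finset.mem_insert.2 (Or.inl (Finset.mem_singleton.1 (supp_single j hk)))
      · exact Finset.mem_insert.2 (Or.inr (hsuppu hk))
    calc (supp (Pi.single j (1:ℝ) : Fin N → ℝ) ∪ supp u).card
        ≤ (insert j (supp x)).card := Finset.card_le_card hsub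
      _ ≤ (supp x).card + 1 := Finset.card_insert_le _ _
      _ ≤ K + 1 := by omega
  have hbil0 : ∀ j : Fin N, |(Φᵀ.mulVec (Φ.mulVec x - Φ.mulVec xsl)) j - u j| ≤ δ * l2 u := by
    intro j
    have hb := bilin hRIP (u := (Pi.single j (1:ℝ) : Fin N → ℝ)) (v := u) (hcardj j)
    rw [dotp_single, l2_single] at hb
    rw [hvec_eq j]
    calc |dotp (Φ.mulVec (Pi.single j (1:ℝ) : Fin N → ℝ)) (Φ.mulVec u) - u j|
        ≤ δ * 1 * l2 u := hb
      _ = δ * l2 u := by ring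
  -- the tail vector
  set xt : Fin N → ℝ := x - restr Λl x with hxt
  have hxtj : ∀ j, xt j = if j ∈ Λl then 0 else x j := by
    intro j
    by_cases h : j ∈ Λl <;> simp [hxt, restr, h]
  have hsuppxt : supp xt ⊆ supp x := by
    intro j hj
    rw [mem_supp] at hj
    rw [hxtj] at hj
    rw [mem_supp]
    intro h0
    apply hj
    split <;> simp [h0]
  have hcardxt : (supp xt).card ≤ K := le_trans (Finset.card_le_card hsuppxt) hsp
  have hminx : l2 (Φ.mulVec u) ≤ l2 (Φ.mulVec xt) := by
    have hz : supp (restr Λl x) ⊆ Λl := by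
      intro k hk
      rw [mem_supp] at hk
      by_contra hc
      rw [restr] at hk
      simp [hc] at hk
    have hm := hmin (restr Λl x) hz
    rw [hr, hxt, Matrix.mulVec_sub]
    exact hm
  have hδu : δ * l2 u ≤ δ' * l2 xt := by
    have hA1 := (hRIP.2.2 u (by omega)).1
    have hA3 := (hRIP.2.2 xt (by omega)).2
    have hA2 : l2 (Φ.mulVec u) ^ 2 ≤ l2 (Φ.mulVec xt) ^ 2 := by
      have := pow_le_pow_left₀ (l2_nonneg _) hminx 2
      exact this
    have hstep1 : (1 - δ) * l2 u ^ 2 ≤ (1 + δ) * l2 xt ^ 2 := by linarith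
    have hsq : (δ * l2 u) ^ 2 ≤ (δ' * l2 xt) ^ 2 := by
      rw [hδ'def, mul_pow, mul_pow, div_pow, div_mul_eq_mul_div, le_div_iff₀ (by positivity)]
      have hX := mul_le_mul_of_nonneg_left hstep1
        (by nlinarith : (0:ℝ) ≤ δ ^ 2 * (1 - δ))
      nlinarith [hX, mul_nonneg (mul_nonneg (sq_nonneg δ) (sq_nonneg δ)) (sq_nonneg (l2 xt))]
    exact le_of_sq (mul_nonneg hδ0.le (l2_nonneg _))
      (mul_nonneg (div_nonneg hδ0.le h1δ.le) (l2_nonneg _)) hsq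
  -- bound on l2 xt
  have hsA : l2 xt ≤ a + c * b := by
    have hxtiℓ : xt (ord iℓ) = x (ord iℓ) := by rw [hxtj, if_neg hordnot]
    have hsplit : xt (ord iℓ) ^ 2 + ∑ j ∈ Finset.univ.erase (ord iℓ), xt j ^ 2
        = ∑ j, xt j ^ 2 :=
      Finset.add_sum_erase Finset.univ (fun j => xt j ^ 2) (Finset.mem_univ (ord iℓ))
    set T' := (Finset.univ.filter fun i : Fin K => ℓ < (i : ℕ)).image ord with hT'
    have hT'sub : T' ⊆ Finset.univ.erase (ord iℓ) := by
      intro j hj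
      rw [hT', Finset.mem_image] at hj
      obtain ⟨i, hi, rfl⟩ := hj
      rw [Finset.mem_filter] at hi
      rw [Finset.mem_erase]
      refine ⟨?_, Finset.mem_univ _⟩
      intro hEq
      have h2 := hinj hEq
      have : (i : ℕ) = ℓ := by rw [h2]
      omega
    have hvanish : ∀ j ∈ Finset.univ.erase (ord iℓ), j ∉ T' → xt j ^ 2 = 0 := by
      intro j hj hnt
      rw [hxtj]
      by_cases hΛ : j ∈ Λl
      · simp [hΛ]
      · rw [if_neg hΛ]
        by_cases hx0j : x j = 0
        · simp [hx0j]
        exfalso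
        obtain ⟨i, rfl⟩ := hcover j hx0j
        rcases lt_trichotomy (i : ℕ) ℓ with h | h | h
        · apply hΛ
          rw [hΛS]
          exact Finset.mem_image_of_mem ord (Finset.mem_filter.2 ⟨Finset.mem_univ _, h⟩)
        · exact (Finset.mem_erase.1 hj).1 (congrArg ord (Fin.ext h))
        · apply hnt
          rw [hT']
          exact Finset.mem_image_of_mem ord (Finset.mem_filter.2 ⟨Finset.mem_univ _, h⟩)
    have hrest : ∑ j ∈ Finset.univ.erase (ord iℓ), xt j ^ 2 = ∑ j ∈ T', xt j ^ 2 :=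
      (Finset.sum_subset hT'sub hvanish).symm
    have hbound : ∀ j ∈ T', xt j ^ 2 ≤ b ^ 2 := by
      intro j hj
      rw [hT', Finset.mem_image] at hj
      obtain ⟨i, hi, rfl⟩ := hj
      have hiℓ' : ℓ < (i : ℕ) := (Finset.mem_filter.1 hi).2
      have h1 : |x (ord i)| ≤ b := hbbound i hiℓ'
      have h2 : |xt (ord i)| ≤ |x (ord i)| := by
        rw [hxtj]
        split
        · simp [abs_nonneg]
        · exact le_rfl
      nlinarith [abs_nonneg (xt (ord i)), sq_abs (xt (ord i)), sq_abs (x (ord i))]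
    have hsumT : ∑ j ∈ T', xt j ^ 2 ≤ (T'.card : ℝ) * b ^ 2 := by
      calc ∑ j ∈ T', xt j ^ 2 ≤ ∑ _j ∈ T', b ^ 2 := Finset.sum_le_sum hbound
        _ = (T'.card : ℝ) * b ^ 2 := by rw [Finset.sum_const, nsmul_eq_mul]
    have hcount : (T'.card : ℝ) ≤ (K : ℝ) - 1 := by
      have h1 : T'.card = ((Finset.univ.filter fun i : Fin K => ℓ < (i : ℕ))).card := by
        rw [hT']
        exact Finset.card_image_of_injective _ hinj
      have h2 : (Finset.univ.filter fun i : Fin K => ℓ < (i : ℕ)) ⊆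
          Finset.univ.erase iℓ := by
        intro i hi
        rw [Finset.mem_filter] at hi
        rw [Finset.mem_erase]
        refine ⟨?_, Finset.mem_univ _⟩
        intro hEq
        have : (i : ℕ) = ℓ := by rw [hEq]
        omega
      have h3 := Finset.card_le_card h2
      rw [Finset.card_erase_of_mem (Finset.mem_univ _)] at h3
      have h4 : T'.card ≤ K - 1 := by
        rw [h1]
        simpa using h3
      have h5 : ((K - 1 : ℕ) : ℝ) = (K : ℝ) - 1 := by
        rw [Nat.cast_sub hK1, Nat.cast_one]
      calc (T'.card : ℝ) ≤ ((K - 1 : ℕ) : ℝ) := by exact_mod_cast h4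
        _ = (K : ℝ) - 1 := h5
    have hsum : ∑ j, xt j ^ 2 ≤ a ^ 2 + ((K : ℝ) - 1) * b ^ 2 := by
      rw [← hsplit, hrest, hxtiℓ]
      have : x (ord iℓ) ^ 2 = a ^ 2 := by rw [hadef, sq_abs]
      rw [this]
      have hb2 : (0:ℝ) ≤ b ^ 2 := sq_nonneg b
      nlinarith [hsumT, hcount]
    have hsq2 : l2 xt ^ 2 ≤ (a + c * b) ^ 2 := by
      rw [l2_sq]
      nlinarith [hcc, mul_nonneg (mul_nonneg ha.le hc0) hb0, sq_nonneg b]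
    exact le_of_sq (l2_nonneg _) (by positivity) hsq2
  -- the key inequality
  have hkey : b + 2 * δ' * l2 xt < a := by
    have h2s : δ' * l2 xt ≤ δ' * (a + c * b) := mul_le_mul_of_nonneg_left hsA hδ'pos.le
    rcases eq_or_lt_of_le hb0 with hbz | hbp
    · have hbz' : b = 0 := hbz.symm
      rw [hbz'] at h2s ⊢
      nlinarith [l2_nonneg xt]
    · have h7 : (1 + 2 * δ' * c) * b < α * (1 - 2 * δ') * b :=
        mul_lt_mul_of_pos_right hαgt hbp
      have h8 : α * b * (1 - 2 * δ') ≤ a * (1 - 2 * δ') :=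
        mul_le_mul_of_nonneg_right hab h12.le
      linarith [h7, h8, h2s]
  -- orthogonality on Λl
  have horth : ∀ j ∈ Λl, (Φᵀ.mulVec (Φ.mulVec x - Φ.mulVec xsl)) j = 0 := by
    intro j hj
    rw [hvec_eq j]
    apply ortho
    intro t
    have hz : supp (xsl + t • (Pi.single j 1 : Fin N → ℝ)) ⊆ Λl := by
      intro k hk
      rcases Finset.mem_union.1 (supp_add_subset _ _ hk) with hk2 | hk2
      · exact hsupp_xs hk2
      · have h3 := supp_smul_single j t hk2
        rw [Finset.mem_singleton] at h3
        rw [h3]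
        exact hj
    have hm := hmin _ hz
    have hEq : Φ.mulVec x - Φ.mulVec (xsl + t • (Pi.single j 1 : Fin N → ℝ))
        = Φ.mulVec u - t • Φ.mulVec (Pi.single j 1 : Fin N → ℝ) := by
      rw [Matrix.mulVec_add, Matrix.mulVec_smul, hr]
      abel
    rw [hEq, hr] at hm
    have hm2 := sumsq_le_sumsq hm
    rw [← hr] at hm2
    calc ∑ i, Φ.mulVec u i ^ 2 = ∑ i, Φ.mulVec u i ^ 2 := rfl
      _ ≤ ∑ i, (Φ.mulVec u i - t • Φ.mulVec (Pi.single j 1 : Fin N → ℝ) i) ^ 2 := by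
          have := hm2
          simpa [Pi.sub_apply, Pi.smul_apply, smul_eq_mul] using this
      _ = ∑ i, (Φ.mulVec u i - t * Φ.mulVec (Pi.single j 1 : Fin N → ℝ) i) ^ 2 := by
          simp [smul_eq_mul]
  -- conclusion
  have hu_atl : u (ord iℓ) = x (ord iℓ) := by
    have h0 := hxsl_zero (ord iℓ) hordnot
    simp [hu, h0]
  have hbig : a - δ' * l2 xt ≤ |(Φᵀ.mulVec (Φ.mulVec x - Φ.mulVec xsl)) (ord iℓ)| := by
    have h1 := hbil0 (ord iℓ)
    have h2 := abs_sub_abs_le_abs_sub (u (ord iℓ))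
      ((Φᵀ.mulVec (Φ.mulVec x - Φ.mulVec xsl)) (ord iℓ))
    rw [hu_atl] at h2
    rw [abs_sub_comm] at h2
    have h3 : |(Φᵀ.mulVec (Φ.mulVec x - Φ.mulVec xsl)) (ord iℓ) - u (ord iℓ)| ≤ δ' * l2 xt :=
      le_trans h1 hδu
    rw [hu_atl] at h3
    rw [← hadef] at h2
    linarith [h2, h3]
  have hsmall : ∀ j, j ≠ ord iℓ → |(Φᵀ.mulVec (Φ.mulVec x - Φ.mulVec xsl)) j|
      ≤ b + δ' * l2 xt := by
    intro j hne
    by_cases hjΛ : j ∈ Λl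
    · rw [horth j hjΛ, abs_zero]
      have := mul_nonneg hδ'pos.le (l2_nonneg xt)
      linarith
    · have h1 := le_trans (hbil0 j) hδu
      have hu_at : u j = x j := by simp [hu, hxsl_zero j hjΛ]
      have hxb : |x j| ≤ b := by
        by_cases hx0j : x j = 0
        · rw [hx0j, abs_zero]; exact hb0
        obtain ⟨i, rfl⟩ := hcover j hx0j
        rcases lt_trichotomy (i : ℕ) ℓ with h | h | h
        · exfalso
          apply hjΛ
          rw [hΛS]
          exact Finset.mem_image_of_mem ord (Finset.mem_filter.2 ⟨Finset.mem_univ _, h⟩)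
        · exact absurd (congrArg ord (Fin.ext h)) hne
        · exact hbbound i h
      calc |(Φᵀ.mulVec (Φ.mulVec x - Φ.mulVec xsl)) j|
          ≤ |u j| + |(Φᵀ.mulVec (Φ.mulVec x - Φ.mulVec xsl)) j - u j| := by
            have := abs_add_le (u j) ((Φᵀ.mulVec (Φ.mulVec x - Φ.mulVec xsl)) j - u j)
            simpa using this
        _ ≤ b + δ' * l2 xt := add_le_add (hu_at ▸ hxb) h1
  by_contra hne
  have h1 := hselmax (ord iℓ)
  have h2 := hsmall jl (fun hEq => hne hEq)
  linarith [hbig, hkey, h1, h2]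


lemma supp_sub_subset {n : ℕ} (x y : Fin n → ℝ) : supp (x - y) ⊆ supp x ∪ supp y := by
  intro j hj
  rw [mem_supp] at hj
  rw [Finset.mem_union, mem_supp, mem_supp]
  by_contra hc; push_neg at hc
  apply hj; simp [hc.1, hc.2]

/-- exact recovery by OMP of strongly-decaying sparse signals under the
RIP of order `K + 1` with `δ < 1/3`.  The entries of `x`, ordered by magnitude, are
given by `x ∘ ord`. -/
theorem stmt8 {M N K : ℕ} (Φ : Matrix (Fin M) (Fin N) ℝ) (δ α : ℝ) (x : Fin N → ℝ)
    (hRIP : RIP (K + 1) Φ δ) (hδ : δ < 1 / 3)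
    (hsp : (supp x).card ≤ K)
    (ord : Fin K → Fin N) (hinj : Function.Injective ord)
    (hcover : ∀ j : Fin N, x j ≠ 0 → ∃ i, ord i = j)
    (hmono : ∀ i i' : Fin K, i ≤ i' → |x (ord i')| ≤ |x (ord i)|)
    (hratio : ∀ (i : Fin K) (hi : (i : ℕ) + 1 < K), |x (ord i)| ≥ α * |x (ord ⟨i + 1, hi⟩)|)
    (hα : α > (1 + 2 * (δ / (1 - δ)) * Real.sqrt ((K : ℝ) - 1)) / (1 - 2 * δ / (1 - δ)))
    (y : Fin M → ℝ) (hy : y = Φ.mulVec x)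
    (Λ : ℕ → Finset (Fin N)) (xs : ℕ → Fin N → ℝ) (jsel : ℕ → Fin N)
    (hΛ0 : Λ 0 = ∅)
    (hls : ∀ ℓ ≤ K, supp (xs ℓ) ⊆ Λ ℓ ∧
      ∀ z : Fin N → ℝ, supp z ⊆ Λ ℓ →
        l2 (y - Φ.mulVec (xs ℓ)) ≤ l2 (y - Φ.mulVec z))
    (hsel : ∀ ℓ < K, ∀ j : Fin N,
      |(Φᵀ.mulVec (y - Φ.mulVec (xs ℓ))) j| ≤ |(Φᵀ.mulVec (y - Φ.mulVec (xs ℓ))) (jsel ℓ)|)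
    (hstep : ∀ ℓ < K, Λ (ℓ + 1) = insert (jsel ℓ) (Λ ℓ)) :
    supp x ⊆ Λ K ∧ xs K = x := by
  subst hy
  set S : ℕ → Finset (Fin N) :=
    fun ℓ => (Finset.univ.filter fun i : Fin K => (i : ℕ) < ℓ).image ord with hS
  have hΛsub : ∀ ℓ < K, Λ ℓ ⊆ Λ (ℓ + 1) := by
    intro ℓ hℓ; rw [hstep ℓ hℓ]; exact Finset.subset_insert _ _
  have hcardΛ : ∀ ℓ ≤ K, (Λ ℓ).card ≤ ℓ := by
    intro ℓ
    induction ℓ with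
    | zero => intro _; rw [hΛ0]; simp
    | succ n ih =>
      intro hn
      rw [hstep n (by omega)]
      calc (insert (jsel n) (Λ n)).card ≤ (Λ n).card + 1 := Finset.card_insert_le _ _
        _ ≤ n + 1 := by have := ih (by omega); omega
  have main : ∀ ℓ, ℓ ≤ K →
      supp x ⊆ Λ ℓ ∨ ∃ h : ℓ < K, Λ ℓ = S ℓ ∧ x (ord ⟨ℓ, h⟩) ≠ 0 := by
    intro ℓ
    induction ℓ with
    | zero =>
      intro _
      by_cases hx : ∀ j, x j = 0
      · left; intro j hj; rw [mem_supp] at hj; exact absurd (hx j) hj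
      · push_neg at hx
        obtain ⟨j, hj⟩ := hx
        obtain ⟨i, rfl⟩ := hcover j hj
        right
        have hK0 : 0 < K := i.pos
        refine ⟨hK0, ?_, ?_⟩
        · rw [hΛ0]; ext k; simp [hS]
        · intro h0
          have hm := hmono ⟨0, hK0⟩ i (by rw [Fin.le_def, Fin.val_mk]; omega)
          rw [h0, abs_zero] at hm
          exact hj (abs_eq_zero.1 (le_antisymm hm (abs_nonneg _)))
    | succ n ih =>
      intro hn
      have hnK : n < K := by omega
      rcases ih (by omega) with hc | ⟨hnK', hΛS, hx0⟩
      · left; exact hc.trans (hΛsub n hnK)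
      · obtain ⟨hsupp_xs, hmin⟩ := hls n (le_of_lt hnK)
        have hjsel : jsel n = ord ⟨n, hnK'⟩ :=
          key_step Φ δ α x hRIP hδ hsp ord hinj hcover hmono hratio hα
            (xs n) (jsel n) (Λ n) n hnK' hΛS hx0 hsupp_xs hmin (hsel n hnK')
        have hΛsucc : Λ (n + 1) = S (n + 1) := by
          rw [hstep n hnK, hjsel, hΛS]
          have hfilter : (Finset.univ.filter fun i : Fin K => (i : ℕ) < n + 1)
              = insert (⟨n, hnK'⟩ : Fin K)
                (Finset.univ.filter fun i : Fin K => (i : ℕ) < n) := by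
            ext i
            simp only [Finset.mem_insert, Finset.mem_filter, Finset.mem_univ, true_and,
              Fin.ext_iff, Fin.val_mk]
            omega
          show insert (ord ⟨n, hnK'⟩) (S n) = S (n + 1)
          rw [hS]
          simp only []
          rw [hfilter, Finset.image_insert]
        by_cases hnext : ∃ h : n + 1 < K, x (ord ⟨n + 1, h⟩) ≠ 0
        · obtain ⟨h1, h2⟩ := hnext
          right; exact ⟨h1, hΛsucc, h2⟩
        · left
          push_neg at hnext
          intro j hj
          rw [mem_supp] at hj
          obtain ⟨i, rfl⟩ := hcover j hj
          rw [hΛsucc]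
          apply Finset.mem_image_of_mem
          rw [Finset.mem_filter]
          refine ⟨Finset.mem_univ _, ?_⟩
          by_contra hge
          push_neg at hge
          have hi1 : n + 1 < K := lt_of_le_of_lt hge i.isLt
          have h0 := hnext hi1
          have hm := hmono ⟨n + 1, hi1⟩ i (by rw [Fin.le_def, Fin.val_mk]; omega)
          rw [h0, abs_zero] at hm
          exact hj (abs_eq_zero.1 (le_antisymm hm (abs_nonneg _)))
  have hsuppΛ : supp x ⊆ Λ K := by
    rcases main K le_rfl with h | ⟨hKK, _⟩
    · exact h
    · omega
  refine ⟨hsuppΛ, ?_⟩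
  obtain ⟨hsuppxs, hminK⟩ := hls K le_rfl
  have hl0 : l2 (0 : Fin M → ℝ) = 0 := by
    unfold l2; simp
  have h0 : l2 (Φ.mulVec x - Φ.mulVec (xs K)) = 0 := by
    have hmx := hminK x hsuppΛ
    rw [sub_self, hl0] at hmx
    exact le_antisymm hmx (l2_nonneg _)
  have hPhi : Φ.mulVec (x - xs K) = 0 := by
    rw [Matrix.mulVec_sub]; exact eq_zero_of_l2 h0
  have hsuppd : supp (x - xs K) ⊆ Λ K := by
    intro j hj
    rcases Finset.mem_union.1 (supp_sub_subset x (xs K) hj) with h | h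
    · exact hsuppΛ h
    · exact hsuppxs h
  have hcardd : (supp (x - xs K)).card ≤ K + 1 := by
    have := le_trans (Finset.card_le_card hsuppd) (hcardΛ K le_rfl)
    omega
  have hlow := (hRIP.2.2 (x - xs K) hcardd).1
  rw [hPhi, hl0] at hlow
  have h1δ : 0 < 1 - δ := by linarith [hRIP.2.1]
  have hz2 : l2 (x - xs K) = 0 := by
    nlinarith [l2_nonneg (x - xs K), sq_nonneg (l2 (x - xs K))]
  have hzz := eq_zero_of_l2 hz2
  exact (sub_eq_zero.1 hzz).symm

end OMP
end
end

section
/- Let h ∈ ℝ^N, let Ω₀ ⊆ {1,…,N} be a regularized set, meaning |h(i)| ≤ 2|h(j)| for all i, j ∈ Ω₀, and let T ⊆ Ω₀ with |T| > |Ω₀|/2. Then ‖h|_T‖₂ ≥ (1/√5)‖h|_{Ω₀}‖₂. -/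
noncomputable section

namespace OMP

open Matrix Finset

lemma sum_restr_sq {n : ℕ} (Γ : Finset (Fin n)) (h : Fin n → ℝ) :
    ∑ j, restr Γ h j ^ 2 = ∑ j ∈ Γ, h j ^ 2 := by
  rw [← Finset.sum_filter_add_sum_filter_not Finset.univ (· ∈ Γ)]
  have h1 : ∀ j ∈ Finset.univ.filter (· ∈ Γ), restr Γ h j ^ 2 = h j ^ 2 := by
    intro j hj; simp at hj; simp [restr, hj]
  have h2 : ∀ j ∈ Finset.univ.filter (¬ · ∈ Γ), restr Γ h j ^ 2 = 0 := by
    intro j hj; simp at hj; simp [restr, hj]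
  rw [Finset.sum_congr rfl h1, Finset.sum_congr rfl h2, Finset.sum_const_zero, add_zero]
  congr 1
  ext j; simp

/-- a majority subset of a regularized set carries at least a `1/√5`
fraction of its energy. -/
theorem stmt12 {N : ℕ} (h : Fin N → ℝ) (Ω₀ T : Finset (Fin N))
    (hreg : ∀ i ∈ Ω₀, ∀ j ∈ Ω₀, |h i| ≤ 2 * |h j|)
    (hT : T ⊆ Ω₀) (hcard : (Ω₀.card : ℝ) / 2 < (T.card : ℝ)) :
    (1 / Real.sqrt 5) * l2 (restr Ω₀ h) ≤ l2 (restr T h) := by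
  have hTpos : 0 < T.card := by
    by_contra hc
    push_neg at hc
    interval_cases hc' : T.card <;> simp_all <;> nlinarith [Nat.cast_nonneg (α := ℝ) Ω₀.card]
  have hcardN : Ω₀.card < 2 * T.card := by exact_mod_cast (by linarith : (Ω₀.card : ℝ) < 2 * T.card)
  set S := Ω₀ \ T with hS
  have hSc : S.card ≤ T.card := by
    have h1 : S.card = Ω₀.card - T.card := by rw [hS]; exact Finset.card_sdiff_of_subset hT
    omega
  set B := ∑ j ∈ T, h j ^ 2 with hB
  have hBnn : 0 ≤ B := Finset.sum_nonneg fun j _ => sq_nonneg _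
  have hC : ∑ j ∈ S, h j ^ 2 ≤ 4 * B := by
    have hstep : (T.card : ℝ) * ∑ j ∈ S, h j ^ 2 ≤ (T.card : ℝ) * (4 * B) := by
      calc (T.card : ℝ) * ∑ j ∈ S, h j ^ 2 = ∑ i ∈ S, ∑ j ∈ T, h i ^ 2 := by
            rw [Finset.mul_sum]
            exact Finset.sum_congr rfl fun i _ => by rw [Finset.sum_const, nsmul_eq_mul]
        _ ≤ ∑ i ∈ S, ∑ j ∈ T, 4 * h j ^ 2 := by
            apply Finset.sum_le_sum; intro i hi
            apply Finset.sum_le_sum; intro j hj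
            have hij := hreg i (Finset.mem_sdiff.mp hi).1 j (hT hj)
            calc h i ^ 2 ≤ (2 * |h j|) ^ 2 := by
                  rw [← sq_abs]; exact pow_le_pow_left₀ (abs_nonneg _) hij 2
              _ = 4 * h j ^ 2 := by rw [mul_pow, sq_abs]; ring
        _ = (S.card : ℝ) * (4 * B) := by
            simp only [Finset.sum_const, nsmul_eq_mul, hB, Finset.mul_sum]
        _ ≤ (T.card : ℝ) * (4 * B) := by
            apply mul_le_mul_of_nonneg_right _ (by positivity)
            exact_mod_cast hSc
    exact le_of_mul_le_mul_left hstep (by exact_mod_cast hTpos)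
  have hkey : ∑ j ∈ Ω₀, h j ^ 2 ≤ 5 * B := by
    rw [← Finset.sum_sdiff hT]
    linarith
  rw [l2, l2, sum_restr_sq, sum_restr_sq, ← hB]
  have h5 : (0:ℝ) < Real.sqrt 5 := Real.sqrt_pos.mpr (by norm_num)
  have hle : Real.sqrt (∑ j ∈ Ω₀, h j ^ 2) ≤ Real.sqrt 5 * Real.sqrt B := by
    rw [← Real.sqrt_mul (by norm_num)]
    exact Real.sqrt_le_sqrt hkey
  calc 1 / Real.sqrt 5 * Real.sqrt (∑ j ∈ Ω₀, h j ^ 2)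
      ≤ 1 / Real.sqrt 5 * (Real.sqrt 5 * Real.sqrt B) := by
        apply mul_le_mul_of_nonneg_left hle (by positivity)
    _ = Real.sqrt B := by field_simp

end OMP
end
end
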